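/- Let (Ω, μ) be a probability space, let Y : Ω → ℝ be an integrable measurable function, and let a ≥ 0 be real. If μ({ω : 0 ≤ Y ω ∧ Y ω ≤ a}) > 0, then (∫_{{0 ≤ Y ≤ a}} Y dμ) / (μ{ω : 0 ≤ Y ω ≤ a}).toReal ≤ (∫_{{Y ≥ 0}} Y dμ) / (μ{ω : Y ω ≥ 0}).toReal. -/

import Mathlib

open MeasureTheory

/-- Conditional-expectation comparison used in the proofs of the paper's
Lemmas 5 and 9: for an integrable random variable `Y` on a probability space,
`E[Y | 0 ≤ Y ≤ a] ≤ E[Y | Y ≥ 0]` whenever the event `{0 ≤ Y ≤ a}` has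
positive probability. -/
theorem truncated_cond_exp_le {Ω : Type*} [MeasurableSpace Ω]
    (μ : Measure Ω) [IsProbabilityMeasure μ]
    (Y : Ω → ℝ) (hmeas : Measurable Y) (hint : Integrable Y μ)
    (a : ℝ) (ha : 0 ≤ a)
    (hpos : 0 < μ {ω | 0 ≤ Y ω ∧ Y ω ≤ a}) :
    (∫ ω in {ω | 0 ≤ Y ω ∧ Y ω ≤ a}, Y ω ∂μ) / (μ {ω | 0 ≤ Y ω ∧ Y ω ≤ a}).toReal
      ≤ (∫ ω in {ω | 0 ≤ Y ω}, Y ω ∂μ) / (μ {ω | 0 ≤ Y ω}).toReal := by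
  set A : Set Ω := {ω | 0 ≤ Y ω ∧ Y ω ≤ a} with hA
  set C : Set Ω := {ω | a < Y ω} with hC
  set B : Set Ω := {ω | 0 ≤ Y ω} with hB
  have hmA : MeasurableSet A := (measurableSet_le measurable_const hmeas).inter
    (measurableSet_le hmeas measurable_const)
  have hmC : MeasurableSet C := measurableSet_lt measurable_const hmeas
  have hmB : MeasurableSet B := measurableSet_le measurable_const hmeas
  have hdisj : Disjoint A C := by
    rw [Set.disjoint_left]
    rintro ω ⟨_, h2⟩ h3
    exact absurd h3 (not_lt.2 h2)
  have hunion : B = A ∪ C := by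
    ext ω
    simp only [hA, hB, hC, Set.mem_setOf_eq, Set.mem_union]
    constructor
    · intro h
      rcases le_or_gt (Y ω) a with h' | h'
      · exact Or.inl ⟨h, h'⟩
      · exact Or.inr h'
    · rintro (⟨h, _⟩ | h)
      · exact h
      · linarith
  have hintA : IntegrableOn Y A μ := hint.integrableOn
  have hintC : IntegrableOn Y C μ := hint.integrableOn
  have hsplit : ∫ ω in B, Y ω ∂μ = (∫ ω in A, Y ω ∂μ) + ∫ ω in C, Y ω ∂μ := by
    rw [hunion, setIntegral_union hdisj hmC hintA hintC]
  have hmeasB : μ B = μ A + μ C := by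
    rw [hunion, measure_union hdisj hmC]
  set IA := ∫ ω in A, Y ω ∂μ
  set IC := ∫ ω in C, Y ω ∂μ
  have hfA : μ A ≠ ⊤ := measure_ne_top μ A
  have hfC : μ C ≠ ⊤ := measure_ne_top μ C
  set mA := (μ A).toReal
  set mC := (μ C).toReal
  have hmApos : 0 < mA := ENNReal.toReal_pos hpos.ne' hfA
  have hmCnn : 0 ≤ mC := ENNReal.toReal_nonneg
  have hmBval : (μ B).toReal = mA + mC := by
    rw [hmeasB, ENNReal.toReal_add hfA hfC]
  have hIAnn : 0 ≤ IA := setIntegral_nonneg hmA (fun ω hω => hω.1)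
  have hIAle : IA ≤ a * mA := by
    have h1 : IA ≤ ∫ _ in A, a ∂μ :=
      setIntegral_mono_on hintA (integrableOn_const hfA) hmA
        (fun ω hω => hω.2)
    rwa [setIntegral_const, smul_eq_mul, mul_comm] at h1
  have hICge : a * mC ≤ IC := by
    have h1 : (∫ _ in C, a ∂μ) ≤ IC :=
      setIntegral_mono_on (integrableOn_const hfC) hintC hmC
        (fun ω hω => le_of_lt hω)
    rwa [setIntegral_const, smul_eq_mul, mul_comm] at h1
  rw [hsplit, hmBval, div_le_div_iff₀ hmApos (by linarith)]
  nlinarith [mul_le_mul_of_nonneg_right hIAle hmCnn, mul_le_mul_of_nonneg_left hICge hmApos.le]
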